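/- For x > 0 and v > 0, the infimum over λ ∈ [0,1) of exp(-λx - (λ + log(1-λ)) v²) equals ((v² + x)/v²)^{v²} · e^{-x}, attained at λ = x/(v² + x). -/

import Mathlib

theorem inf_attained_poisson (x v : ℝ) (hx : 0 < x) (hv : 0 < v) :
    IsLeast
      {y : ℝ | ∃ l, 0 ≤ l ∧ l < 1 ∧
        y = Real.exp (-l * x - (l + Real.log (1 - l)) * v ^ 2)}
      (((v ^ 2 + x) / v ^ 2) ^ (v ^ 2) * Real.exp (-x)) ∧
    Real.exp (-(x / (v ^ 2 + x)) * x
        - (x / (v ^ 2 + x) + Real.log (1 - x / (v ^ 2 + x))) * v ^ 2)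
      = ((v ^ 2 + x) / v ^ 2) ^ (v ^ 2) * Real.exp (-x) := by
  have hv2 : (0:ℝ) < v ^ 2 := by positivity
  have hsum : 0 < v ^ 2 + x := by linarith
  set r := (v ^ 2 + x) / v ^ 2 with hr
  have hrpos : 0 < r := by positivity
  have hlogr : Real.log r = Real.log (v ^ 2 + x) - Real.log (v ^ 2) :=
    Real.log_div (ne_of_gt hsum) (ne_of_gt hv2)
  have hrval : r ^ (v ^ 2) * Real.exp (-x) = Real.exp (-x + v ^ 2 * Real.log r) := by
    rw [Real.rpow_def_of_pos hrpos, ← Real.exp_add]; ring_nf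
  have hl : (1 : ℝ) - x / (v ^ 2 + x) = v ^ 2 / (v ^ 2 + x) := by field_simp; ring
  have heq : Real.exp (-(x / (v ^ 2 + x)) * x
        - (x / (v ^ 2 + x) + Real.log (1 - x / (v ^ 2 + x))) * v ^ 2)
      = r ^ (v ^ 2) * Real.exp (-x) := by
    rw [hrval, hl, Real.log_div (ne_of_gt hv2) (ne_of_gt hsum), hlogr]
    congr 1
    field_simp
    ring
  refine ⟨⟨⟨x / (v ^ 2 + x), by positivity, ?_, heq.symm⟩, ?_⟩, heq⟩
  · rw [div_lt_one hsum]; linarith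
  · rintro y ⟨l, hl0, hl1, rfl⟩
    rw [hrval]
    apply Real.exp_le_exp.mpr
    have ha : 0 < 1 - l := by linarith
    have ht : 0 < (1 - l) * r := by positivity
    have key := Real.log_le_sub_one_of_pos ht
    rw [Real.log_mul (ne_of_gt ha) (ne_of_gt hrpos)] at key
    have hrexp : r * v ^ 2 = v ^ 2 + x := div_mul_cancel₀ _ (ne_of_gt hv2)
    nlinarith [mul_le_mul_of_nonneg_left key hv2.le, hrexp]
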